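/- The fundamental group of the circle based at the point 1 is isomorphic to the additive group of integers; that is, there is a group isomorphism between the fundamental group of the unit circle in the complex numbers at the basepoint 1 and the integers (viewed as a multiplicative group). -/

import Mathlib

open Complex Set unitInterval

noncomputable section

namespace CircleDegree

lemma mem_slitPlane_of_ne_neg_one {z : Circle} (h : (z : ℂ) ≠ -1) : (z : ℂ) ∈ slitPlane := by
  by_contra hc
  rw [mem_slitPlane_iff] at hc
  push_neg at hc
  obtain ⟨h1, h2⟩ := hc
  have hz : ((z : ℂ).re : ℂ) = (z : ℂ) := by
    apply Complex.ext <;> simp [h2]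
  have habs : ‖(z : ℂ)‖ = 1 := Circle.norm_coe z
  rw [← hz, Complex.norm_real, Real.norm_eq_abs] at habs
  have hre : (z : ℂ).re = -1 := by
    rcases abs_cases (z:ℂ).re with h | h <;> linarith [h.1, h.2]
  apply h
  rw [← hz, hre]
  norm_num

lemma div_ne_neg_one_of_dist_lt {z w : Circle} (h : dist (z : ℂ) (w : ℂ) < 2) :
    ((z / w : Circle) : ℂ) ≠ -1 := by
  intro hc
  rw [Circle.coe_div, div_eq_iff (Circle.coe_ne_zero w)] at hc
  rw [dist_eq_norm, hc] at h
  have h2 : ‖(-1 : ℂ) * w - w‖ = 2 * ‖(w:ℂ)‖ := by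
    rw [show (-1 : ℂ) * w - w = -(2 * w) by ring]
    simp
  rw [h2, Circle.norm_coe, mul_one] at h
  linarith

lemma circleExp_sum (s : Finset ℕ) (f : ℕ → ℝ) :
    Circle.exp (∑ j ∈ s, f j) = ∏ j ∈ s, Circle.exp (f j) := by
  classical
  induction s using Finset.induction with
  | empty => simp
  | insert _ _ h ih => rw [Finset.sum_insert h, Finset.prod_insert h, Circle.exp_add, ih]





/-- Auxiliary grid point: `min t (j/N)` as an element of `I`. -/
def pt (N : ℕ) (t : I) (j : ℕ) : I :=
  ⟨min t.1 ((j : ℝ) / N), le_min t.2.1 (by positivity), min_le_of_left_le t.2.2⟩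

lemma pt_coe (N : ℕ) (t : I) (j : ℕ) : (pt N t j : ℝ) = min t.1 ((j : ℝ) / N) := rfl

lemma pt_zero_left (N : ℕ) (j : ℕ) : pt N 0 j = 0 :=
  Subtype.ext (min_eq_left (by positivity))

lemma pt_zero_right (N : ℕ) (t : I) : pt N t 0 = 0 :=
  Subtype.ext (by simp [pt_coe, min_eq_right t.2.1])

lemma pt_self (N : ℕ) (hN : N ≠ 0) (t : I) : pt N t N = t := by
  apply Subtype.ext
  rw [pt_coe, div_self (by exact_mod_cast hN), min_eq_left t.2.2]

lemma continuous_pt (N : ℕ) (j : ℕ) : Continuous fun t : I => pt N t j :=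
  Continuous.subtype_mk (continuous_subtype_val.min continuous_const) _

lemma pt_dist (N : ℕ) (hN : N ≠ 0) (t : I) (j : ℕ) :
    dist (pt N t (j + 1)) (pt N t j) ≤ 1 / N := by
  have hN' : (0:ℝ) < N := by positivity
  rw [Subtype.dist_eq, Real.dist_eq, pt_coe, pt_coe]
  push_cast
  set a := t.1
  set b := ((j : ℝ) + 1) / N with hb
  set c := (j : ℝ) / N with hc
  have hcb : c ≤ b := by rw [hb, hc]; gcongr; linarith
  have h1 : min a c ≤ min a b := min_le_min le_rfl hcb
  have h2 : min a b - min a c ≤ b - c := by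
    rcases le_total a c with h | h
    · rw [min_eq_left h, min_eq_left (h.trans hcb)]; linarith [sub_nonneg.2 hcb]
    · rw [min_eq_right h]
      have := min_le_right a b
      linarith
  rw [_root_.abs_of_nonneg (by linarith : (0:ℝ) ≤ a ⊓ b - a ⊓ c)]
  have hbc : b - c = 1 / N := by rw [hb, hc]; field_simp; ring
  linarith

theorem exists_lift (γ : C(I, Circle)) (x : ℝ) (hx : Circle.exp x = γ 0) :
    ∃ g : C(I, ℝ), g 0 = x ∧ ∀ t, Circle.exp (g t) = γ t := by
  obtain ⟨δ, hδ, hd⟩ := Metric.uniformContinuous_iff.mp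
    (CompactSpace.uniformContinuous_of_continuous γ.continuous) 2 two_pos
  obtain ⟨n, hn⟩ := exists_nat_one_div_lt hδ
  set N := n + 1 with hNdef
  have hN : N ≠ 0 := Nat.succ_ne_zero n
  have hn' : (1 : ℝ) / N < δ := by exact_mod_cast hn
  -- the step quotients stay away from -1
  have hstep : ∀ (t : I) (j : ℕ),
      ((γ (pt N t (j+1)) / γ (pt N t j) : Circle) : ℂ) ≠ -1 := by
    intro t j
    apply div_ne_neg_one_of_dist_lt
    have h1 : dist (γ (pt N t (j+1))) (γ (pt N t j)) < 2 :=
      hd (lt_of_le_of_lt (pt_dist N hN t j) hn')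
    exact h1
  have hcont : Continuous fun t : I =>
      x + ∑ j ∈ Finset.range N, Complex.arg ((γ (pt N t (j+1)) / γ (pt N t j) : Circle) : ℂ) := by
    apply continuous_const.add
    apply continuous_finset_sum
    intro j _
    rw [continuous_iff_continuousAt]
    intro t
    have hc : Continuous fun t : I => ((γ (pt N t (j+1)) / γ (pt N t j) : Circle) : ℂ) := by
      exact continuous_subtype_val.comp
        (((γ.continuous.comp (continuous_pt N (j+1))).div' (γ.continuous.comp (continuous_pt N j))))
    have h1 : ContinuousAt Complex.arg ((γ (pt N t (j+1)) / γ (pt N t j) : Circle) : ℂ) :=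
      Complex.continuousAt_arg (mem_slitPlane_of_ne_neg_one (hstep t j))
    exact ContinuousAt.comp (x := t) h1 hc.continuousAt
  refine ⟨⟨_, hcont⟩, ?_, ?_⟩
  · simp only [ContinuousMap.coe_mk]
    have : ∀ j ∈ Finset.range N,
        Complex.arg ((γ (pt N 0 (j+1)) / γ (pt N 0 j) : Circle) : ℂ) = 0 := by
      intro j _
      rw [pt_zero_left, pt_zero_left, div_self']
      simp
    rw [Finset.sum_congr rfl this]
    simp
  · intro t
    simp only [ContinuousMap.coe_mk]
    rw [Circle.exp_add, circleExp_sum]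
    have : ∀ j ∈ Finset.range N,
        Circle.exp (Complex.arg ((γ (pt N t (j+1)) / γ (pt N t j) : Circle) : ℂ))
          = γ (pt N t (j+1)) / γ (pt N t j) := fun j _ => Circle.exp_arg _
    rw [Finset.prod_congr rfl this, Finset.prod_range_div (fun j => γ (pt N t j)) N,
      pt_self N hN, pt_zero_right, hx]
    exact mul_div_cancel _ _

theorem lift_unique (g h : C(I, ℝ)) (h0 : g 0 = h 0)
    (he : ∀ t, Circle.exp (g t) = Circle.exp (h t)) (t : I) : g t = h t := by
  have hπ : (0:ℝ) < 2 * Real.pi := by positivity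
  have key : ∀ s : I, ∃ m : ℤ, g s - h s = m * (2 * Real.pi) := by
    intro s
    obtain ⟨m, hm⟩ := Circle.exp_eq_exp.mp (he s)
    exact ⟨m, by linarith⟩
  have hopen : IsOpen {s : I | g s = h s} := by
    rw [isOpen_iff_forall_mem_open]
    intro t₀ ht₀
    refine ⟨(fun s => g s - h s) ⁻¹' Metric.ball (g t₀ - h t₀) (2 * Real.pi), ?_, ?_, ?_⟩
    · intro s hs
      obtain ⟨m, hm⟩ := key s
      simp only [Set.mem_preimage, Metric.mem_ball, Real.dist_eq] at hs
      have ht0 : g t₀ - h t₀ = 0 := by rw [Set.mem_setOf_eq.mp ht₀]; ring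
      rw [ht0, sub_zero, hm, abs_mul, abs_of_pos hπ] at hs
      have hm0 : m = 0 := by
        by_contra hm0
        have : (1:ℝ) ≤ |(m:ℝ)| := by exact_mod_cast Int.one_le_abs (by exact_mod_cast hm0)
        nlinarith
      have : g s - h s = 0 := by rw [hm, hm0]; push_cast; ring
      simpa [Set.mem_setOf_eq, sub_eq_zero] using this
    · exact (g.continuous.sub h.continuous).isOpen_preimage _ Metric.isOpen_ball
    · simp [Metric.mem_ball, hπ]
  have hclosed : IsClosed {s : I | g s = h s} := isClosed_eq g.continuous h.continuous
  have huniv : {s : I | g s = h s} = Set.univ :=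
    IsClopen.eq_univ ⟨hclosed, hopen⟩ ⟨0, h0⟩
  have := huniv ▸ Set.mem_univ t
  exact this

/-- The canonical lift of a loop at `1` starting at `0`. -/
def liftPath (γ : Path (1:Circle) 1) : C(I, ℝ) :=
  (exists_lift γ.toContinuousMap 0 (by simp [Circle.exp_zero])).choose

lemma liftPath_zero (γ : Path (1:Circle) 1) : liftPath γ 0 = 0 :=
  (exists_lift γ.toContinuousMap 0 (by simp [Circle.exp_zero])).choose_spec.1

lemma exp_liftPath (γ : Path (1:Circle) 1) (t : I) : Circle.exp (liftPath γ t) = γ t :=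
  (exists_lift γ.toContinuousMap 0 (by simp [Circle.exp_zero])).choose_spec.2 t

lemma degEx (γ : Path (1:Circle) 1) : ∃ n : ℤ, liftPath γ 1 = n * (2 * Real.pi) :=
  Circle.exp_eq_one.mp ((exp_liftPath γ 1).trans γ.target)

/-- The winding number (degree) of a loop at `1`. -/
def deg (γ : Path (1:Circle) 1) : ℤ := (degEx γ).choose

lemma liftPath_one (γ : Path (1:Circle) 1) : liftPath γ 1 = deg γ * (2 * Real.pi) :=
  (degEx γ).choose_spec

lemma deg_eq_of_lift (γ : Path (1:Circle) 1) (g : C(I, ℝ)) (hg0 : g 0 = 0)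
    (hg : ∀ t, Circle.exp (g t) = γ t) (n : ℤ) (h1 : g 1 = n * (2 * Real.pi)) :
    deg γ = n := by
  have h := lift_unique g (liftPath γ) (by rw [hg0, liftPath_zero])
    (fun t => by rw [hg t, exp_liftPath]) 1
  rw [h1, liftPath_one] at h
  have hπ : (0:ℝ) < 2 * Real.pi := by positivity
  have h2 : (n:ℝ) = deg γ := mul_right_cancel₀ (ne_of_gt hπ) h
  exact_mod_cast h2.symm

lemma deg_trans (γ γ' : Path (1:Circle) 1) : deg (γ.trans γ') = deg γ + deg γ' := by
  set P : Path (0:ℝ) ((deg γ : ℝ) * (2 * Real.pi)) :=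
    ⟨liftPath γ, liftPath_zero γ, liftPath_one γ⟩ with hP
  set Q : Path ((deg γ : ℝ) * (2 * Real.pi))
      ((deg γ : ℝ) * (2 * Real.pi) + (deg γ' : ℝ) * (2 * Real.pi)) :=
    ⟨⟨fun t => (deg γ : ℝ) * (2 * Real.pi) + liftPath γ' t,
        continuous_const.add (liftPath γ').continuous⟩,
      by simp [liftPath_zero], by simp [liftPath_one]⟩ with hQ
  refine deg_eq_of_lift (γ.trans γ') (P.trans Q).toContinuousMap (P.trans Q).source ?_ _ ?_
  · intro t
    show Circle.exp ((P.trans Q) t) = (γ.trans γ') t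
    rw [Path.trans_apply, Path.trans_apply]
    split_ifs with h
    · exact exp_liftPath γ _
    · show Circle.exp ((deg γ : ℝ) * (2 * Real.pi) + liftPath γ' _) = _
      rw [Circle.exp_add, Circle.exp_int_mul_two_pi, one_mul, exp_liftPath]
  · show (P.trans Q) 1 = _
    rw [(P.trans Q).target]
    push_cast
    ring

lemma deg_eq_of_div_ne (γ γ' : Path (1:Circle) 1)
    (h : ∀ t, ((γ t / γ' t : Circle) : ℂ) ≠ -1) : deg γ = deg γ' := by
  have hc : Continuous fun t : I => liftPath γ' t + Complex.arg ((γ t / γ' t : Circle) : ℂ) := by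
    apply (liftPath γ').continuous.add
    rw [continuous_iff_continuousAt]
    intro t
    have hcc : Continuous fun t : I => ((γ t / γ' t : Circle) : ℂ) :=
      continuous_subtype_val.comp (γ.continuous.div' γ'.continuous)
    have h1 : ContinuousAt Complex.arg ((γ t / γ' t : Circle) : ℂ) :=
      Complex.continuousAt_arg (mem_slitPlane_of_ne_neg_one (h t))
    exact ContinuousAt.comp (x := t) h1 hcc.continuousAt
  refine deg_eq_of_lift γ ⟨_, hc⟩ ?_ ?_ (deg γ') ?_
  · show liftPath γ' 0 + Complex.arg ((γ 0 / γ' 0 : Circle) : ℂ) = 0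
    rw [liftPath_zero]
    simp
  · intro t
    show Circle.exp (liftPath γ' t + Complex.arg _) = γ t
    rw [Circle.exp_add, exp_liftPath, Circle.exp_arg]
    exact mul_div_cancel _ _
  · show liftPath γ' 1 + Complex.arg ((γ 1 / γ' 1 : Circle) : ℂ) = _
    rw [liftPath_one]
    simp

lemma deg_eq_of_homotopy (γ γ' : Path (1:Circle) 1) (H : Path.Homotopy γ γ') :
    deg γ = deg γ' := by
  obtain ⟨δ, hδ, hd⟩ := Metric.uniformContinuous_iff.mp
    (CompactSpace.uniformContinuous_of_continuous H.continuous) 2 two_pos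
  set d : I → ℤ := fun s => deg (H.eval s) with hdd
  have hloc : ∀ s s' : I, dist s s' < δ → d s = d s' := by
    intro s s' hss
    apply deg_eq_of_div_ne
    intro t
    apply div_ne_neg_one_of_dist_lt
    have hp : dist ((s, t) : I × I) ((s', t)) < δ := by
      rw [Prod.dist_eq]
      simp only [dist_self]
      rw [max_eq_left dist_nonneg]
      exact hss
    have h2 := hd hp
    exact h2
  have hclopen : IsClopen {s : I | d s = d 0} := by
    constructor
    · rw [← isOpen_compl_iff]
      rw [Metric.isOpen_iff]
      intro s hs
      exact ⟨δ, hδ, fun s' hs' => by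
        have := hloc s' s (Metric.mem_ball.mp hs')
        simp only [Set.mem_compl_iff, Set.mem_setOf_eq] at hs ⊢
        rw [this]; exact hs⟩
    · rw [Metric.isOpen_iff]
      intro s hs
      exact ⟨δ, hδ, fun s' hs' => by
        have := hloc s' s (Metric.mem_ball.mp hs')
        simp only [Set.mem_setOf_eq] at hs ⊢
        rw [this]; exact hs⟩
  have huniv := IsClopen.eq_univ hclopen ⟨0, rfl⟩
  have h1 : d 1 = d 0 := by
    have : (1:I) ∈ {s : I | d s = d 0} := huniv.symm ▸ Set.mem_univ (1:I)
    exact this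
  have e0 : H.eval 0 = γ := Path.Homotopy.eval_zero H
  have e1 : H.eval 1 = γ' := Path.Homotopy.eval_one H
  rw [hdd] at h1
  simp only [e0, e1] at h1
  exact h1.symm

lemma deg_eq_of_homotopic (γ γ' : Path (1:Circle) 1) (h : γ.Homotopic γ') :
    deg γ = deg γ' := by
  obtain ⟨H⟩ := h
  exact deg_eq_of_homotopy γ γ' H

/-- The standard loop of winding number `n`. -/
def loopZ (n : ℤ) : Path (1:Circle) 1 where
  toFun t := Circle.exp ((n : ℝ) * (2 * Real.pi) * t)
  continuous_toFun := Circle.exp.continuous.comp (continuous_const.mul continuous_subtype_val)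
  source' := by simp
  target' := by simpa using Circle.exp_int_mul_two_pi n

lemma deg_loopZ (n : ℤ) : deg (loopZ n) = n := by
  refine deg_eq_of_lift (loopZ n)
    ⟨fun t => (n : ℝ) * (2 * Real.pi) * t, continuous_const.mul continuous_subtype_val⟩
    (by simp) (fun t => rfl) n (by simp)

lemma homotopic_refl_of_deg_zero (γ : Path (1:Circle) 1) (h : deg γ = 0) :
    γ.Homotopic (Path.refl 1) := by
  have h1 : liftPath γ 1 = 0 := by rw [liftPath_one, h]; push_cast; ring
  refine ⟨⟨⟨⟨fun p => Circle.exp ((1 - (p.1 : ℝ)) * liftPath γ p.2), ?_⟩, ?_, ?_⟩, ?_⟩⟩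
  · exact Circle.exp.continuous.comp
      ((continuous_const.sub (continuous_subtype_val.comp continuous_fst)).mul
        ((liftPath γ).continuous.comp continuous_snd))
  · intro x
    show Circle.exp ((1 - ((0:I) : ℝ)) * liftPath γ x) = γ x
    norm_num [exp_liftPath]
  · intro x
    show Circle.exp ((1 - ((1:I) : ℝ)) * liftPath γ x) = (Path.refl (1:Circle)) x
    norm_num
  · intro t x hx
    rcases hx with rfl | hx
    · show Circle.exp ((1 - (t : ℝ)) * liftPath γ 0) = _
      rw [liftPath_zero, mul_zero, Circle.exp_zero]
      simp
    · rcases hx with rfl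
      show Circle.exp ((1 - (t : ℝ)) * liftPath γ 1) = _
      rw [h1, mul_zero, Circle.exp_zero]
      simp

section Final

attribute [local instance] Path.Homotopic.setoid

open CategoryTheory

/-- Degree descends to homotopy classes. -/
def degQ (p : Path.Homotopic.Quotient (1:Circle) (1:Circle)) : ℤ :=
  Quotient.liftOn p deg fun a b h => deg_eq_of_homotopic a b h

lemma degQ_mk (γ : Path (1:Circle) 1) : degQ ⟦γ⟧ = deg γ := rfl

lemma degQ_comp (a b : Path.Homotopic.Quotient (1:Circle) (1:Circle)) :
    degQ (a.trans b) = degQ a + degQ b := by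
  induction a using Quotient.inductionOn with
  | h x =>
    induction b using Quotient.inductionOn with
    | h y =>
      show deg (x.trans y) = _
      exact deg_trans x y

/-- An element of the fundamental group of the circle, as a homotopy class of loops. -/
def toLoop (p : FundamentalGroup Circle (1:Circle)) :
    Path.Homotopic.Quotient (1:Circle) (1:Circle) :=
  FundamentalGroup.toPath p

lemma toLoop_mul (p q : FundamentalGroup Circle (1:Circle)) :
    toLoop (p * q) = (toLoop q).trans (toLoop p) := rfl

lemma eq_one_of_toLoop (p : FundamentalGroup Circle (1:Circle))
    (h : toLoop p = ⟦Path.refl 1⟧) : p = 1 :=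
  h

/-- The degree homomorphism on the fundamental group. -/
def degHom : FundamentalGroup Circle (1:Circle) →* Multiplicative ℤ :=
  MonoidHom.mk' (fun p => Multiplicative.ofAdd (degQ (toLoop p))) (by
    intro p q
    show Multiplicative.ofAdd (degQ (toLoop (p * q)))
      = Multiplicative.ofAdd (degQ (toLoop p)) * Multiplicative.ofAdd (degQ (toLoop q))
    rw [toLoop_mul, degQ_comp, ← ofAdd_add, add_comm])

end Final

end CircleDegree

/-- The fundamental group of the circle based at `1` is isomorphic to
the additive group of integers (viewed as a multiplicative group). -/
theorem fundamentalGroup_circle_iso_int :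
    Nonempty (FundamentalGroup Circle (1 : Circle) ≃* Multiplicative ℤ) := by
  letI := Path.Homotopic.setoid (1:Circle) (1:Circle)
  refine ⟨MulEquiv.ofBijective CircleDegree.degHom ⟨?_, ?_⟩⟩
  · refine (injective_iff_map_eq_one CircleDegree.degHom).mpr ?_
    intro p hp
    have h0 : CircleDegree.degQ (CircleDegree.toLoop p) = 0 := by
      simpa [CircleDegree.degHom] using hp
    obtain ⟨γ, hγ⟩ := Quotient.exists_rep (CircleDegree.toLoop p)
    have hd : CircleDegree.deg γ = 0 := by
      rw [← CircleDegree.degQ_mk γ, hγ]; exact h0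
    apply CircleDegree.eq_one_of_toLoop
    rw [← hγ]
    exact Quotient.sound (CircleDegree.homotopic_refl_of_deg_zero γ hd)
  · intro n
    refine ⟨⟦CircleDegree.loopZ n.toAdd⟧, ?_⟩
    show Multiplicative.ofAdd
      (CircleDegree.degQ (⟦CircleDegree.loopZ n.toAdd⟧ :
        Path.Homotopic.Quotient (1:Circle) (1:Circle))) = n
    rw [CircleDegree.degQ_mk, CircleDegree.deg_loopZ]
    simp
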